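/- Let π = (π₁, …, π₈) and τ = (τ₁, …, τ₈) be two fixed rearrangements of the eight index symbols p₁, q₁, p₂, q₂, p₃, q₃, p₄, q₄, applied to each tuple of indices. For each k ∈ {5, 6, 7, 8} there exists a universal constant C > 0 such that for every m and every m×m correlation matrix R: Σ over all tuples (p₁, q₁, …, p₄, q₄) ∈ {1,…,m}⁸ with |{p₁, q₁, …, p₄, q₄}| = k of ∏_{d' ∈ {1,3,5,7}} |ρ_{π_{d'} π_{d'+1}} · ρ_{τ_{d'} τ_{d'+1}}| ≤ C · m^{8−k} · ‖R − I_m‖_F^{2(k−4)}. -/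

import Mathlib

open Finset

noncomputable section

/-- `R` is an `m × m` (Pearson) correlation matrix: symmetric positive semidefinite
with unit diagonal. -/
def IsCorrMatrix {m : ℕ} (R : Matrix (Fin m) (Fin m) ℝ) : Prop :=
  R.PosSemidef ∧ ∀ p, R p p = 1

/-- The Frobenius norm `‖R - I_m‖_F`. -/
def frobDistId {m : ℕ} (R : Matrix (Fin m) (Fin m) ℝ) : ℝ :=
  Real.sqrt (∑ p, ∑ q, (R p q - if p = q then (1 : ℝ) else 0) ^ 2)

variable {m : ℕ} {R : Matrix (Fin m) (Fin m) ℝ}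


lemma corr_symm (h : IsCorrMatrix R) (a b : Fin m) : R b a = R a b := by
  have := h.1.1
  rw [Matrix.IsHermitian] at this
  conv_lhs => rw [← this]
  simp [Matrix.conjTranspose_apply]

lemma frob_sq (h : IsCorrMatrix R) :
    frobDistId R ^ 2 = ∑ p, ∑ q, (R p q - if p = q then (1 : ℝ) else 0) ^ 2 := by
  apply Real.sq_sqrt; positivity

lemma corr_quadform_le (h : IsCorrMatrix R) (z : Fin m → ℝ) :
    ∑ p, ∑ q, z p * R p q * z q ≤ (1 + frobDistId R) * ∑ p, (z p)^2 := by
  set F := frobDistId R with hF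
  set A : Matrix (Fin m) (Fin m) ℝ := fun p q => R p q - if p = q then 1 else 0 with hA
  have hsplit : ∀ p q, z p * R p q * z q = z p * A p q * z q + (if p = q then z p * z q else 0) := by
    intro p q; by_cases hpq : p = q <;> simp [hA, hpq] <;> ring
  have h1 : ∑ p, ∑ q, z p * R p q * z q
      = (∑ p, ∑ q, z p * A p q * z q) + ∑ p, (z p)^2 := by
    simp only [hsplit, Finset.sum_add_distrib]
    congr 1
    refine Finset.sum_congr rfl fun p _ => ?_
    simp [Finset.sum_ite_eq, sq]
  have hcs : (∑ p, ∑ q, z p * A p q * z q) ≤ F * ∑ p, (z p)^2 := by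
    have hZ : (0:ℝ) ≤ ∑ p, (z p)^2 := by positivity
    have hF0 : (0:ℝ) ≤ F := Real.sqrt_nonneg _
    have key := Finset.sum_mul_sq_le_sq_mul_sq (univ : Finset (Fin m × Fin m))
      (fun p => A p.1 p.2) (fun p => z p.1 * z p.2)
    have e1 : ∑ p : Fin m × Fin m, A p.1 p.2 * (z p.1 * z p.2)
        = ∑ p, ∑ q, z p * A p q * z q := by
      rw [Fintype.sum_prod_type]
      exact Finset.sum_congr rfl fun p _ => Finset.sum_congr rfl fun q _ => by ring
    have e2 : ∑ p : Fin m × Fin m, (A p.1 p.2)^2 = F^2 := by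
      rw [Fintype.sum_prod_type, frob_sq h]
    have e3 : ∑ p : Fin m × Fin m, (z p.1 * z p.2)^2 = (∑ p, (z p)^2)^2 := by
      rw [Fintype.sum_prod_type, sq (∑ p, (z p)^2), Finset.sum_mul]
      refine Finset.sum_congr rfl fun p _ => ?_
      rw [Finset.mul_sum]
      exact Finset.sum_congr rfl fun q _ => by ring
    rw [e1, e2, e3] at key
    nlinarith [key, mul_nonneg hF0 hZ]
  linarith [h1, hcs]

lemma corr_row_sum_le (h : IsCorrMatrix R) (a : Fin m) :
    ∑ b ∈ univ.filter (fun b => b ≠ a), (R a b)^2 ≤ frobDistId R := by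
  set F := frobDistId R with hF
  have hF0 : (0:ℝ) ≤ F := Real.sqrt_nonneg _
  obtain ⟨B, hB⟩ : ∃ B : Matrix (Fin m) (Fin m) ℝ, R = B.conjTranspose * B := by
    open scoped MatrixOrder in exact CStarAlgebra.nonneg_iff_eq_star_mul_self.mp h.1.nonneg
  set z : Fin m → ℝ := fun p => R p a with hz
  set Z : ℝ := ∑ p, (z p)^2 with hZdef
  have hRB : ∀ p q, R p q = ∑ i, B i p * B i q := by
    intro p q
    rw [hB]
    simp [Matrix.mul_apply, Matrix.conjTranspose_apply]
  have hZ0 : (0:ℝ) ≤ Z := by positivity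
  have hZeq : Z = ∑ i, B i a * (∑ p, B i p * z p) := by
    calc Z = ∑ p, (∑ i, B i p * B i a) * z p := by
            refine Finset.sum_congr rfl fun p _ => ?_
            rw [← hRB p a, sq]
      _ = ∑ p, ∑ i, B i p * B i a * z p := by
            refine Finset.sum_congr rfl fun p _ => Finset.sum_mul _ _ _
      _ = ∑ i, ∑ p, B i p * B i a * z p := Finset.sum_comm
      _ = ∑ i, B i a * (∑ p, B i p * z p) := by
            refine Finset.sum_congr rfl fun i _ => ?_
            rw [Finset.mul_sum]
            exact Finset.sum_congr rfl fun p _ => by ring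
  have hcs := Finset.sum_mul_sq_le_sq_mul_sq (univ : Finset (Fin m))
      (fun i => B i a) (fun i => ∑ p, B i p * z p)
  have hBa : ∑ i, (B i a)^2 = 1 := by
    have := hRB a a
    rw [h.2 a] at this
    rw [this]
    exact Finset.sum_congr rfl fun i _ => (sq _)
  have hu : ∑ i, (∑ p, B i p * z p)^2 = ∑ p, ∑ q, z p * R p q * z q := by
    calc ∑ i, (∑ p, B i p * z p)^2
        = ∑ i, ∑ p, ∑ q, (B i p * z p) * (B i q * z q) := by
          refine Finset.sum_congr rfl fun i _ => ?_
          rw [sq, Finset.sum_mul]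
          exact Finset.sum_congr rfl fun p _ => Finset.mul_sum _ _ _
      _ = ∑ p, ∑ i, ∑ q, (B i p * z p) * (B i q * z q) := Finset.sum_comm
      _ = ∑ p, ∑ q, ∑ i, (B i p * z p) * (B i q * z q) := by
          exact Finset.sum_congr rfl fun p _ => Finset.sum_comm
      _ = ∑ p, ∑ q, z p * R p q * z q := by
          refine Finset.sum_congr rfl fun p _ => Finset.sum_congr rfl fun q _ => ?_
          rw [hRB p q, Finset.mul_sum, Finset.sum_mul]
          exact Finset.sum_congr rfl fun i _ => by ring
  have hquad := corr_quadform_le h z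
  have hZZ : Z^2 ≤ (1 + F) * Z := by
    calc Z^2 = (∑ i, B i a * (∑ p, B i p * z p))^2 := by rw [← hZeq]
      _ ≤ (∑ i, (B i a)^2) * (∑ i, (∑ p, B i p * z p)^2) := hcs
      _ = ∑ p, ∑ q, z p * R p q * z q := by rw [hBa, hu, one_mul]
      _ ≤ (1 + F) * Z := hquad
  have hZ1 : (1:ℝ) ≤ Z := by
    have : (z a)^2 ≤ Z := Finset.single_le_sum (f := fun p => (z p)^2)
      (fun p _ => sq_nonneg _) (mem_univ a)
    have hza : z a = 1 := by rw [hz]; exact h.2 a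
    rw [hza] at this; simpa using this
  have hZle : Z ≤ 1 + F := by nlinarith
  have hsum : ∑ b ∈ univ.filter (fun b => b ≠ a), (R a b)^2 = Z - 1 := by
    have : Z = (z a)^2 + ∑ b ∈ univ.erase a, (z b)^2 := by
      rw [hZdef]
      exact (Finset.add_sum_erase univ (fun p => (z p)^2) (mem_univ a)).symm
    have hza : z a = 1 := h.2 a
    have hfe : univ.filter (fun b => b ≠ a) = univ.erase a := by
      ext b; simp [Finset.mem_erase, and_comm]
    rw [hfe]
    have : ∑ b ∈ univ.erase a, (z b)^2 = Z - 1 := by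
      rw [this, hza]; ring
    rw [← this]
    refine Finset.sum_congr rfl fun b _ => ?_
    rw [hz]
    simp [corr_symm h a b]
  linarith [hsum, hZle]

lemma corr_quadform (h : IsCorrMatrix R) (x : Fin m → ℝ) :
    0 ≤ ∑ a, ∑ b, x a * R a b * x b := by
  have := h.1.dotProduct_mulVec_nonneg x
  simpa [dotProduct, Matrix.mulVec, Finset.mul_sum, mul_assoc] using this

lemma corr_sq_le_one (h : IsCorrMatrix R) (a b : Fin m) : (R a b)^2 ≤ 1 := by
  by_cases hab : a = b
  · subst hab; simp [h.2 a]
  · set t : ℝ := -(R a b) with ht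
    have key := corr_quadform h (fun i => (if i = a then t else 0) + (if i = b then 1 else 0))
    have hsymm : R b a = R a b := corr_symm h a b
    simp only [add_mul, mul_add, ite_mul, zero_mul, mul_ite, mul_zero, one_mul, mul_one,
      Finset.sum_add_distrib, Finset.sum_ite_eq', Finset.mem_univ, if_true] at key
    rw [h.2 a, h.2 b, hsymm] at key
    nlinarith [key]

lemma corr_frob_le (h : IsCorrMatrix R) : frobDistId R ≤ (m : ℝ) := by
  have hb : ∑ p, ∑ q, (R p q - if p = q then (1 : ℝ) else 0) ^ 2 ≤ (m : ℝ)^2 := by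
    have : ∀ p q : Fin m, (R p q - if p = q then (1 : ℝ) else 0) ^ 2 ≤ 1 := by
      intro p q
      by_cases hpq : p = q
      · subst hpq; simp [h.2 p]
      · rw [if_neg hpq]; simpa using corr_sq_le_one h p q
    calc ∑ p, ∑ q, (R p q - if p = q then (1 : ℝ) else 0) ^ 2
        ≤ ∑ _p : Fin m, ∑ _q : Fin m, (1:ℝ) := by
          exact Finset.sum_le_sum fun p _ => Finset.sum_le_sum fun q _ => this p q
      _ = (m:ℝ) * (m:ℝ) := by simp
      _ = (m:ℝ)^2 := (sq (m:ℝ)).symm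
  calc frobDistId R ≤ Real.sqrt ((m:ℝ)^2) := Real.sqrt_le_sqrt hb
    _ = (m:ℝ) := Real.sqrt_sq (by positivity)

lemma corr_row_subset (h : IsCorrMatrix R) (a : Fin m) (U : Finset (Fin m)) (hU : a ∉ U) :
    ∑ b ∈ U, (R a b)^2 ≤ frobDistId R := by
  refine le_trans (Finset.sum_le_sum_of_subset_of_nonneg ?_ (fun i _ _ => sq_nonneg _))
    (corr_row_sum_le h a)
  intro b hb
  simp only [Finset.mem_filter, Finset.mem_univ, true_and]
  rintro rfl; exact hU hb

lemma corr_col_subset (h : IsCorrMatrix R) (a : Fin m) (U : Finset (Fin m)) (hU : a ∉ U) :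
    ∑ b ∈ U, (R b a)^2 ≤ frobDistId R := by
  have : ∑ b ∈ U, (R b a)^2 = ∑ b ∈ U, (R a b)^2 :=
    Finset.sum_congr rfl fun b _ => by rw [corr_symm h a b]
  rw [this]; exact corr_row_subset h a U hU

lemma corr_offdiag_total (h : IsCorrMatrix R) (U : Finset (Fin m × Fin m))
    (hU : ∀ p ∈ U, p.1 ≠ p.2) :
    ∑ p ∈ U, (R p.1 p.2)^2 ≤ frobDistId R ^ 2 := by
  have e : ∑ p ∈ U, (R p.1 p.2)^2
      = ∑ p ∈ U, (R p.1 p.2 - if p.1 = p.2 then (1:ℝ) else 0)^2 := by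
    refine Finset.sum_congr rfl fun p hp => ?_
    rw [if_neg (hU p hp), sub_zero]
  rw [e, frob_sq h]
  have e2 : ∑ p : Fin m, ∑ q : Fin m, (R p q - if p = q then (1:ℝ) else 0) ^ 2
      = ∑ p : Fin m × Fin m, (R p.1 p.2 - if p.1 = p.2 then (1:ℝ) else 0)^2 := by
    rw [Fintype.sum_prod_type]
  rw [e2]
  exact Finset.sum_le_sum_of_subset_of_nonneg (Finset.subset_univ U)
    (fun i _ _ => sq_nonneg _)

def Tb (m : ℕ) (F : ℝ) (n k : ℕ) : ℝ :=
  ∑ i ∈ Finset.range (n+1), if i ≤ k ∧ k + i ≤ 2*n then (m:ℝ)^i * F^(k-i) else 0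

lemma Tb_nonneg {m : ℕ} {F : ℝ} (hF0 : 0 ≤ F) (n k : ℕ) : 0 ≤ Tb m F n k := by
  refine Finset.sum_nonneg fun i _ => ?_
  split
  · positivity
  · exact le_rfl

lemma Tb_mono {m : ℕ} {F : ℝ} (hF0 : 0 ≤ F) (n k : ℕ) : Tb m F n k ≤ Tb m F (n+1) k := by
  rw [Tb, Tb, Finset.sum_range_succ (n := n+1)]
  have h2 : (0:ℝ) ≤ if n+1 ≤ k ∧ k + (n+1) ≤ 2*(n+1) then (m:ℝ)^(n+1) * F^(k-(n+1)) else 0 := by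
    split
    · positivity
    · exact le_rfl
  refine le_trans ?_ (le_add_of_nonneg_right h2)
  refine Finset.sum_le_sum fun i _ => ?_
  by_cases hc : i ≤ k ∧ k + i ≤ 2*n
  · rw [if_pos hc, if_pos ⟨hc.1, by omega⟩]
  · rw [if_neg hc]
    split
    · positivity
    · exact le_rfl

lemma Tb_F {m : ℕ} {F : ℝ} (hF0 : 0 ≤ F) (n k : ℕ) :
    F * Tb m F n k ≤ Tb m F (n+1) (k+1) := by
  rw [Tb, Tb, Finset.mul_sum, Finset.sum_range_succ (n := n+1)]
  have h2 : (0:ℝ) ≤ if n+1 ≤ k+1 ∧ (k+1) + (n+1) ≤ 2*(n+1) then (m:ℝ)^(n+1) * F^(k+1-(n+1)) else 0 := by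
    split
    · positivity
    · exact le_rfl
  refine le_trans ?_ (le_add_of_nonneg_right h2)
  refine Finset.sum_le_sum fun i _ => ?_
  by_cases hc : i ≤ k ∧ k + i ≤ 2*n
  · rw [if_pos hc, if_pos (show i ≤ k+1 ∧ (k+1) + i ≤ 2*(n+1) by omega)]
    have : k + 1 - i = (k - i) + 1 := by omega
    rw [this, pow_succ]
    ring_nf
    exact le_rfl
  · rw [if_neg hc, mul_zero]
    split
    · positivity
    · exact le_rfl

lemma Tb_m {m : ℕ} {F : ℝ} (hF0 : 0 ≤ F) (n k : ℕ) :
    (m:ℝ) * Tb m F n k ≤ Tb m F (n+1) (k+1) := by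
  rw [Tb, Tb, Finset.mul_sum, Finset.sum_range_succ' (fun i => if i ≤ k+1 ∧ (k+1) + i ≤ 2*(n+1) then (m:ℝ)^i * F^(k+1-i) else 0) (n+1)]
  have h2 : (0:ℝ) ≤ if 0 ≤ k+1 ∧ (k+1) + 0 ≤ 2*(n+1) then (m:ℝ)^0 * F^(k+1-0) else 0 := by
    split
    · positivity
    · exact le_rfl
  refine le_trans ?_ (le_add_of_nonneg_right h2)
  refine Finset.sum_le_sum fun i _ => ?_
  by_cases hc : i ≤ k ∧ k + i ≤ 2*n
  · rw [if_pos hc, if_pos (show i+1 ≤ k+1 ∧ (k+1) + (i+1) ≤ 2*(n+1) by omega)]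
    have : k + 1 - (i+1) = k - i := by omega
    rw [this, pow_succ]
    ring_nf
    exact le_rfl
  · rw [if_neg hc, mul_zero]
    split
    · positivity
    · exact le_rfl

lemma Tb_F2 {m : ℕ} {F : ℝ} (hF0 : 0 ≤ F) (n k : ℕ) :
    F^2 * Tb m F n k ≤ Tb m F (n+1) (k+2) := by
  rw [Tb, Tb, Finset.mul_sum, Finset.sum_range_succ (n := n+1)]
  have h2 : (0:ℝ) ≤ if n+1 ≤ k+2 ∧ (k+2) + (n+1) ≤ 2*(n+1) then (m:ℝ)^(n+1) * F^(k+2-(n+1)) else 0 := by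
    split
    · positivity
    · exact le_rfl
  refine le_trans ?_ (le_add_of_nonneg_right h2)
  refine Finset.sum_le_sum fun i _ => ?_
  by_cases hc : i ≤ k ∧ k + i ≤ 2*n
  · rw [if_pos hc, if_pos (show i ≤ k+2 ∧ (k+2) + i ≤ 2*(n+1) by omega)]
    have : k + 2 - i = (k - i) + 2 := by omega
    rw [this, pow_add]
    ring_nf
    exact le_rfl
  · rw [if_neg hc, mul_zero]
    split
    · positivity
    · exact le_rfl

lemma Tb_F' {m : ℕ} {F : ℝ} (hF0 : 0 ≤ F) (n k : ℕ) :
    F * (if 1 ≤ k then Tb m F n (k-1) else 0) ≤ Tb m F (n+1) k := by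
  by_cases hk : 1 ≤ k
  · rw [if_pos hk]
    have := Tb_F (m := m) hF0 n (k-1)
    have hk1 : k - 1 + 1 = k := by omega
    rwa [hk1] at this
  · rw [if_neg hk, mul_zero]
    exact Tb_nonneg hF0 _ _

lemma Tb_m' {m : ℕ} {F : ℝ} (hF0 : 0 ≤ F) (n k : ℕ) :
    (m:ℝ) * (if 1 ≤ k then Tb m F n (k-1) else 0) ≤ Tb m F (n+1) k := by
  by_cases hk : 1 ≤ k
  · rw [if_pos hk]
    have := Tb_m (m := m) hF0 n (k-1)
    have hk1 : k - 1 + 1 = k := by omega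
    rwa [hk1] at this
  · rw [if_neg hk, mul_zero]
    exact Tb_nonneg hF0 _ _

lemma Tb_F2' {m : ℕ} {F : ℝ} (hF0 : 0 ≤ F) (n k : ℕ) :
    F^2 * (if 2 ≤ k then Tb m F n (k-2) else 0) ≤ Tb m F (n+1) k := by
  by_cases hk : 2 ≤ k
  · rw [if_pos hk]
    have := Tb_F2 (m := m) hF0 n (k-2)
    have hk1 : k - 2 + 2 = k := by omega
    rwa [hk1] at this
  · rw [if_neg hk, mul_zero]
    exact Tb_nonneg hF0 _ _

lemma Tb_final {m : ℕ} {F : ℝ} (hF0 : 0 ≤ F) (hFm : F ≤ (m:ℝ)) {k : ℕ} (hk5 : 5 ≤ k) (hk8 : k ≤ 8) :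
    Tb m F 4 k ≤ 5 * ((m:ℝ)^(8-k) * F^(2*(k-4))) := by
  have hM : (0:ℝ) ≤ (m:ℝ)^(8-k) * F^(2*(k-4)) := by positivity
  rw [Tb]
  calc ∑ i ∈ Finset.range 5, (if i ≤ k ∧ k + i ≤ 2*4 then (m:ℝ)^i * F^(k-i) else 0)
      ≤ ∑ _i ∈ Finset.range 5, (m:ℝ)^(8-k) * F^(2*(k-4)) := by
        refine Finset.sum_le_sum fun i hi => ?_
        by_cases hc : i ≤ k ∧ k + i ≤ 2*4
        · rw [if_pos hc]
          have hi8 : i ≤ 8 - k := by omega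
          have hsplit : k - i = (8 - k - i) + 2*(k-4) := by omega
          rw [hsplit, pow_add]
          have h1 : F^(8-k-i) ≤ (m:ℝ)^(8-k-i) := pow_le_pow_left₀ hF0 hFm _
          have h2 : (m:ℝ)^i * (m:ℝ)^(8-k-i) = (m:ℝ)^(8-k) := by
            rw [← pow_add]; congr 1; omega
          calc (m:ℝ)^i * (F^(8-k-i) * F^(2*(k-4)))
              ≤ (m:ℝ)^i * ((m:ℝ)^(8-k-i) * F^(2*(k-4))) := by
                have : (0:ℝ) ≤ F^(2*(k-4)) := by positivity
                have hmi : (0:ℝ) ≤ (m:ℝ)^i := by positivity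
                nlinarith [mul_le_mul_of_nonneg_right h1 this]
            _ = (m:ℝ)^(8-k) * F^(2*(k-4)) := by rw [← mul_assoc, h2]
        · rw [if_neg hc]; exact hM
    _ = 5 * ((m:ℝ)^(8-k) * F^(2*(k-4))) := by
        rw [Finset.sum_const, Finset.card_range]; push_cast; ring

def pairVals {m n : ℕ} (w : Fin n → Fin m × Fin m) : Finset (Fin m) :=
  Finset.image (fun d => (w d).1) Finset.univ ∪ Finset.image (fun d => (w d).2) Finset.univ

lemma pairVals_cons {m n : ℕ} (p : Fin m × Fin m) (w : Fin n → Fin m × Fin m) :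
    pairVals (Fin.cons p w) = insert p.1 (insert p.2 (pairVals w)) := by
  ext x
  simp only [pairVals, Finset.mem_union, Finset.mem_image, Finset.mem_insert, Finset.mem_univ,
    true_and]
  constructor
  · rintro (⟨d, hd⟩ | ⟨d, hd⟩)
    · rcases Fin.eq_zero_or_eq_succ d with h0 | ⟨j, hj⟩
      · subst h0; simp at hd; tauto
      · subst hj; rw [Fin.cons_succ] at hd; exact Or.inr (Or.inr (Or.inl ⟨j, hd⟩))
    · rcases Fin.eq_zero_or_eq_succ d with h0 | ⟨j, hj⟩
      · subst h0; simp at hd; tauto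
      · subst hj; rw [Fin.cons_succ] at hd; exact Or.inr (Or.inr (Or.inr ⟨j, hd⟩))
  · rintro (h | h | ⟨d, hd⟩ | ⟨d, hd⟩)
    · exact Or.inl ⟨0, by simp [h]⟩
    · exact Or.inr ⟨0, by simp [h]⟩
    · exact Or.inl ⟨d.succ, by simp [Fin.cons_succ, hd]⟩
    · exact Or.inr ⟨d.succ, by simp [Fin.cons_succ, hd]⟩

set_option maxHeartbeats 1000000 in
theorem core_bound : ∀ n : ℕ, ∃ C : ℝ, 0 < C ∧ ∀ (m : ℕ) (R : Matrix (Fin m) (Fin m) ℝ),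
    IsCorrMatrix R → ∀ (S : Finset (Fin m)) (k : ℕ), S.card + 2*n ≤ 8 →
    (∑ w : Fin n → Fin m × Fin m,
       if (S ∪ pairVals w).card = S.card + k then ∏ d, (R (w d).1 (w d).2)^2 else 0)
      ≤ C * Tb m (frobDistId R) n k := by
  intro n
  induction n with
  | zero =>
      refine ⟨1, one_pos, fun m R hR S k _ => ?_⟩
      have hpv : pairVals (fun d : Fin 0 => Fin.elim0 d) = (∅ : Finset (Fin m)) := by
        simp [pairVals]
      rw [Fintype.sum_unique]
      have hu : (default : Fin 0 → Fin m × Fin m) = fun d => Fin.elim0 d := by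
        funext d; exact Fin.elim0 d
      rw [hu, hpv]
      simp only [Finset.union_empty, Finset.univ_eq_empty, Finset.prod_empty, one_mul]
      rw [Tb]
      rcases Nat.eq_zero_or_pos k with hk | hk
      · subst hk
        simp
      · rw [if_neg (by omega)]
        rw [Finset.sum_range_one, if_neg (by omega)]
  | succ n IH =>
      obtain ⟨C, hC0, IH⟩ := IH
      refine ⟨82 * C, by positivity, fun m R hR S k hcard => ?_⟩
      set F := frobDistId R with hFdef
      have hF0 : 0 ≤ F := Real.sqrt_nonneg _
      -- rewrite sum over Fin (n+1) functions as double sum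
      have key : ∀ (p : Fin m × Fin m) (w : Fin n → Fin m × Fin m),
          (if (S ∪ pairVals (Fin.cons p w : Fin (n+1) → Fin m × Fin m)).card = S.card + k
            then ∏ d, (R ((Fin.cons p w : Fin (n+1) → Fin m × Fin m) d).1
              ((Fin.cons p w : Fin (n+1) → Fin m × Fin m) d).2)^2 else 0)
          = (R p.1 p.2)^2 *
            (if (insert p.1 (insert p.2 S) ∪ pairVals w).card = S.card + k
             then ∏ d, (R (w d).1 (w d).2)^2 else 0) := by
        intro p w
        rw [pairVals_cons]
        have e2 : S ∪ insert p.1 (insert p.2 (pairVals w))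
            = insert p.1 (insert p.2 S) ∪ pairVals w := by
          rw [Finset.union_insert, Finset.union_insert, Finset.insert_union, Finset.insert_union]
        have e3 : (∏ d : Fin (n+1), (R ((Fin.cons p w : Fin (n+1) → Fin m × Fin m) d).1
              ((Fin.cons p w : Fin (n+1) → Fin m × Fin m) d).2)^2)
            = (R p.1 p.2)^2 * ∏ d : Fin n, (R (w d).1 (w d).2)^2 := by
          rw [Fin.prod_univ_succ]
          simp [Fin.cons_succ]
        rw [e2, e3, mul_ite, mul_zero]
      have hsum : (∑ w : Fin (n+1) → Fin m × Fin m,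
          if (S ∪ pairVals w).card = S.card + k then ∏ d, (R (w d).1 (w d).2)^2 else 0)
        = ∑ p : Fin m × Fin m, ∑ w : Fin n → Fin m × Fin m,
            (R p.1 p.2)^2 *
            (if (insert p.1 (insert p.2 S) ∪ pairVals w).card = S.card + k
             then ∏ d, (R (w d).1 (w d).2)^2 else 0) := by
        rw [← Fintype.sum_equiv (Fin.consEquiv (fun _ : Fin (n+1) => (Fin m × Fin m)))
          (fun pw => if (S ∪ pairVals (Fin.cons pw.1 pw.2 : Fin (n+1) → Fin m × Fin m)).card
              = S.card + k
            then ∏ d, (R ((Fin.cons pw.1 pw.2 : Fin (n+1) → Fin m × Fin m) d).1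
              ((Fin.cons pw.1 pw.2 : Fin (n+1) → Fin m × Fin m) d).2)^2 else 0)
          (fun w => if (S ∪ pairVals w).card = S.card + k
            then ∏ d, (R (w d).1 (w d).2)^2 else 0)
          (fun pw => rfl), Fintype.sum_prod_type]
        exact Finset.sum_congr rfl fun p _ => Finset.sum_congr rfl fun w _ => key p w
      rw [hsum]
      -- inner bound
      have innb : ∀ (p : Fin m × Fin m) (δ : ℕ), δ ≤ 2 →
          (insert p.1 (insert p.2 S)).card = S.card + δ →
          (∑ w : Fin n → Fin m × Fin m,
            if (insert p.1 (insert p.2 S) ∪ pairVals w).card = S.card + k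
            then ∏ d, (R (w d).1 (w d).2)^2 else 0)
          ≤ C * (if δ ≤ k then Tb m F n (k - δ) else 0) := by
        intro p δ hδ2 hScard
        by_cases hδk : δ ≤ k
        · rw [if_pos hδk]
          have hrw : S.card + k = (insert p.1 (insert p.2 S)).card + (k - δ) := by omega
          rw [show (fun w : Fin n → Fin m × Fin m =>
              if (insert p.1 (insert p.2 S) ∪ pairVals w).card = S.card + k
              then ∏ d, (R (w d).1 (w d).2)^2 else 0) = fun w =>
              if (insert p.1 (insert p.2 S) ∪ pairVals w).card
                = (insert p.1 (insert p.2 S)).card + (k - δ)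
              then ∏ d, (R (w d).1 (w d).2)^2 else 0 from by
            funext w; rw [← hrw]]
          exact IH m R hR _ _ (by omega)
        · rw [if_neg hδk, mul_zero]
          refine le_of_eq (Finset.sum_eq_zero fun w _ => ?_)
          rw [if_neg]
          intro hc
          have : (insert p.1 (insert p.2 S)).card ≤ (insert p.1 (insert p.2 S) ∪ pairVals w).card :=
            Finset.card_le_card Finset.subset_union_left
          omega
      have innb_nonneg : ∀ p : Fin m × Fin m,
          0 ≤ (∑ w : Fin n → Fin m × Fin m,
            if (insert p.1 (insert p.2 S) ∪ pairVals w).card = S.card + k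
            then ∏ d, (R (w d).1 (w d).2)^2 else 0) := by
        intro p
        refine Finset.sum_nonneg fun w _ => ?_
        split
        · positivity
        · exact le_rfl
      set G1 : ℝ := Tb m F n k with hG1
      set G2 : ℝ := if 1 ≤ k then Tb m F n (k-1) else 0 with hG2
      set G3 : ℝ := if 2 ≤ k then Tb m F n (k-2) else 0 with hG3
      have hG1n : 0 ≤ G1 := Tb_nonneg hF0 _ _
      have hG2n : 0 ≤ G2 := by rw [hG2]; split; exacts [Tb_nonneg hF0 _ _, le_rfl]
      have hG3n : 0 ≤ G3 := by rw [hG3]; split; exacts [Tb_nonneg hF0 _ _, le_rfl]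
      -- pointwise bound by five classes
      have main : ∀ p : Fin m × Fin m,
          (R p.1 p.2)^2 * (∑ w : Fin n → Fin m × Fin m,
            if (insert p.1 (insert p.2 S) ∪ pairVals w).card = S.card + k
            then ∏ d, (R (w d).1 (w d).2)^2 else 0)
          ≤ (if p.1 ∈ S ∧ p.2 ∈ S then C * G1 else 0)
            + (if p.1 ∈ S ∧ p.2 ∉ S then (R p.1 p.2)^2 * (C * G2) else 0)
            + (if p.1 ∉ S ∧ p.2 ∈ S then (R p.1 p.2)^2 * (C * G2) else 0)
            + (if p.1 ∉ S ∧ p.2 = p.1 then C * G2 else 0)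
            + (if p.1 ∉ S ∧ p.2 ∉ S ∧ p.1 ≠ p.2 then (R p.1 p.2)^2 * (C * G3) else 0) := by
        intro p
        by_cases h1 : p.1 ∈ S
        · by_cases h2 : p.2 ∈ S
          · -- class 1 : δ = 0
            have hins : insert p.1 (insert p.2 S) = S := by
              rw [Finset.insert_eq_self.mpr h2, Finset.insert_eq_self.mpr h1]
            have hb := innb p 0 (by omega) (by rw [hins]; omega)
            simp only [Nat.zero_le, if_pos, Nat.sub_zero] at hb
            have : (R p.1 p.2)^2 * _ ≤ 1 * (C * G1) :=
              mul_le_mul (corr_sq_le_one hR p.1 p.2) hb (innb_nonneg p) zero_le_one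
            rw [one_mul] at this
            simp only [h1, h2, if_pos, and_self, true_and]
            rw [if_neg (by tauto), if_neg (by tauto), if_neg (by tauto), if_neg (by tauto)]
            linarith
          · -- class 2 : δ = 1
            have hins : (insert p.1 (insert p.2 S)).card = S.card + 1 := by
              rw [Finset.insert_eq_self.mpr (Finset.mem_insert_of_mem h1),
                Finset.card_insert_of_notMem h2]
            have hb := innb p 1 (by omega) hins
            have : (R p.1 p.2)^2 * _ ≤ (R p.1 p.2)^2 * (C * (if 1 ≤ k then Tb m F n (k-1) else 0)) :=
              mul_le_mul_of_nonneg_left hb (sq_nonneg _)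
            rw [← hG2] at this
            rw [if_neg (by tauto), if_pos ⟨h1, h2⟩, if_neg (by tauto), if_neg (by tauto),
              if_neg (by tauto)]
            linarith
        · by_cases h2 : p.2 ∈ S
          · -- class 3 : δ = 1
            have hins : (insert p.1 (insert p.2 S)).card = S.card + 1 := by
              rw [Finset.insert_eq_self.mpr h2, Finset.card_insert_of_notMem h1]
            have hb := innb p 1 (by omega) hins
            have : (R p.1 p.2)^2 * _ ≤ (R p.1 p.2)^2 * (C * (if 1 ≤ k then Tb m F n (k-1) else 0)) :=
              mul_le_mul_of_nonneg_left hb (sq_nonneg _)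
            rw [← hG2] at this
            rw [if_neg (by tauto), if_neg (by tauto), if_pos ⟨h1, h2⟩,
              if_neg (by rintro ⟨ha, hb⟩; rw [hb] at h2; exact h1 h2), if_neg (by tauto)]
            linarith
          · by_cases h3 : p.2 = p.1
            · -- class 4 : δ = 1, diagonal
              have hins : (insert p.1 (insert p.2 S)).card = S.card + 1 := by
                rw [h3, Finset.insert_idem, Finset.card_insert_of_notMem h1]
              have hb := innb p 1 (by omega) hins
              rw [← hG2] at hb
              have hr1 : (R p.1 p.2)^2 = 1 := by rw [h3, hR.2 p.1]; norm_num
              rw [if_neg (by tauto), if_neg (by tauto), if_neg (by tauto), if_pos ⟨h1, h3⟩,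
                if_neg (by rintro ⟨-, -, hne⟩; exact hne h3.symm), hr1, one_mul]
              linarith
            · -- class 5 : δ = 2
              have hins : (insert p.1 (insert p.2 S)).card = S.card + 2 := by
                rw [Finset.card_insert_of_notMem, Finset.card_insert_of_notMem h2]
                intro hc
                rcases Finset.mem_insert.mp hc with hc | hc
                · exact h3 hc.symm
                · exact h1 hc
              have hb := innb p 2 (by omega) hins
              have : (R p.1 p.2)^2 * _ ≤ (R p.1 p.2)^2 * (C * (if 2 ≤ k then Tb m F n (k-2) else 0)) :=
                mul_le_mul_of_nonneg_left hb (sq_nonneg _)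
              rw [← hG3] at this
              rw [if_neg (by tauto), if_neg (by tauto), if_neg (by tauto), if_neg (by tauto),
                if_pos ⟨h1, h2, fun hh => h3 hh.symm⟩]
              linarith
      -- sum the five classes
      have hle := Finset.sum_le_sum (fun p (_ : p ∈ (univ : Finset (Fin m × Fin m))) => main p)
      rw [Finset.sum_add_distrib, Finset.sum_add_distrib, Finset.sum_add_distrib,
        Finset.sum_add_distrib] at hle
      have hCn : (0:ℝ) ≤ C := le_of_lt hC0
      have hS8 : (S.card : ℝ) ≤ 8 := by
        have : S.card ≤ 8 := by omega
        exact_mod_cast this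
      -- class 1 total
      have t1 : (∑ p : Fin m × Fin m, if p.1 ∈ S ∧ p.2 ∈ S then C * G1 else 0)
          ≤ 64 * (C * G1) := by
        rw [← Finset.sum_filter, Finset.sum_const, nsmul_eq_mul]
        have hfil : (univ.filter (fun p : Fin m × Fin m => p.1 ∈ S ∧ p.2 ∈ S)) = S ×ˢ S := by
          ext p; simp [Finset.mem_product]
        have hcard64 : ((univ.filter (fun p : Fin m × Fin m => p.1 ∈ S ∧ p.2 ∈ S)).card : ℝ) ≤ 64 := by
          rw [hfil, Finset.card_product]
          have : S.card ≤ 8 := by omega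
          have : S.card * S.card ≤ 64 := by nlinarith
          exact_mod_cast this
        exact mul_le_mul_of_nonneg_right hcard64 (by positivity)
      -- class 2 total
      have t2 : (∑ p : Fin m × Fin m, if p.1 ∈ S ∧ p.2 ∉ S then (R p.1 p.2)^2 * (C * G2) else 0)
          ≤ 8 * F * (C * G2) := by
        have e : (∑ p : Fin m × Fin m, if p.1 ∈ S ∧ p.2 ∉ S then (R p.1 p.2)^2 * (C * G2) else 0)
            = (∑ p : Fin m × Fin m, if p.1 ∈ S ∧ p.2 ∉ S then (R p.1 p.2)^2 else 0) * (C * G2) := by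
          rw [Finset.sum_mul]
          refine Finset.sum_congr rfl fun p _ => ?_
          split
          · rfl
          · rw [zero_mul]
        rw [e]
        refine mul_le_mul_of_nonneg_right ?_ (by positivity)
        rw [Fintype.sum_prod_type]
        have hinner : ∀ a : Fin m, (∑ b : Fin m, if a ∈ S ∧ b ∉ S then (R a b)^2 else 0)
            ≤ if a ∈ S then F else 0 := by
          intro a
          by_cases ha : a ∈ S
          · rw [if_pos ha]
            have e2 : (∑ b : Fin m, if a ∈ S ∧ b ∉ S then (R a b)^2 else 0)
                = ∑ b ∈ univ.filter (fun b => b ∉ S), (R a b)^2 := by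
              rw [Finset.sum_filter]
              exact Finset.sum_congr rfl fun b _ => by simp [ha]
            rw [e2]
            exact corr_row_subset hR a _ (by simp [ha])
          · rw [if_neg ha]
            refine le_of_eq (Finset.sum_eq_zero fun b _ => ?_)
            rw [if_neg (by tauto)]
        calc (∑ a : Fin m, ∑ b : Fin m, if a ∈ S ∧ b ∉ S then (R a b)^2 else 0)
            ≤ ∑ a : Fin m, (if a ∈ S then F else 0) :=
              Finset.sum_le_sum fun a _ => hinner a
          _ = S.card * F := by rw [← Finset.sum_filter, Finset.sum_const, nsmul_eq_mul]; simp
          _ ≤ 8 * F := mul_le_mul_of_nonneg_right hS8 hF0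
      -- class 3 total
      have t3 : (∑ p : Fin m × Fin m, if p.1 ∉ S ∧ p.2 ∈ S then (R p.1 p.2)^2 * (C * G2) else 0)
          ≤ 8 * F * (C * G2) := by
        have e : (∑ p : Fin m × Fin m, if p.1 ∉ S ∧ p.2 ∈ S then (R p.1 p.2)^2 * (C * G2) else 0)
            = (∑ p : Fin m × Fin m, if p.1 ∉ S ∧ p.2 ∈ S then (R p.1 p.2)^2 else 0) * (C * G2) := by
          rw [Finset.sum_mul]
          refine Finset.sum_congr rfl fun p _ => ?_
          split
          · rfl
          · rw [zero_mul]
        rw [e]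
        refine mul_le_mul_of_nonneg_right ?_ (by positivity)
        rw [Fintype.sum_prod_type_right]
        have hinner : ∀ b : Fin m, (∑ a : Fin m, if a ∉ S ∧ b ∈ S then (R a b)^2 else 0)
            ≤ if b ∈ S then F else 0 := by
          intro b
          by_cases hb : b ∈ S
          · rw [if_pos hb]
            have e2 : (∑ a : Fin m, if a ∉ S ∧ b ∈ S then (R a b)^2 else 0)
                = ∑ a ∈ univ.filter (fun a => a ∉ S), (R a b)^2 := by
              rw [Finset.sum_filter]
              exact Finset.sum_congr rfl fun a _ => by simp [hb]
            rw [e2]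
            exact corr_col_subset hR b _ (by simp [hb])
          · rw [if_neg hb]
            refine le_of_eq (Finset.sum_eq_zero fun a _ => ?_)
            rw [if_neg (by tauto)]
        calc (∑ b : Fin m, ∑ a : Fin m, if a ∉ S ∧ b ∈ S then (R a b)^2 else 0)
            ≤ ∑ b : Fin m, (if b ∈ S then F else 0) :=
              Finset.sum_le_sum fun b _ => hinner b
          _ = S.card * F := by rw [← Finset.sum_filter, Finset.sum_const, nsmul_eq_mul]; simp
          _ ≤ 8 * F := mul_le_mul_of_nonneg_right hS8 hF0
      -- class 4 total
      have t4 : (∑ p : Fin m × Fin m, if p.1 ∉ S ∧ p.2 = p.1 then C * G2 else 0)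
          ≤ (m:ℝ) * (C * G2) := by
        rw [← Finset.sum_filter, Finset.sum_const, nsmul_eq_mul]
        refine mul_le_mul_of_nonneg_right ?_ (by positivity)
        have hcm : (univ.filter (fun p : Fin m × Fin m => p.1 ∉ S ∧ p.2 = p.1)).card ≤ m := by
          have := Finset.card_le_card_of_injOn
            (s := univ.filter (fun p : Fin m × Fin m => p.1 ∉ S ∧ p.2 = p.1))
            (t := (univ : Finset (Fin m))) (fun p : Fin m × Fin m => p.1)
            (fun p _ => Finset.mem_univ p.1)
            (fun p hp q hq hpq => by
              simp only [Finset.mem_coe, Finset.mem_filter] at hp hq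
              have h1 : p.1 = q.1 := hpq
              exact Prod.ext_iff.mpr ⟨h1, by rw [hp.2.2, hq.2.2, h1]⟩)
          simpa using this
        exact_mod_cast hcm
      -- class 5 total
      have t5 : (∑ p : Fin m × Fin m, if p.1 ∉ S ∧ p.2 ∉ S ∧ p.1 ≠ p.2
            then (R p.1 p.2)^2 * (C * G3) else 0)
          ≤ F^2 * (C * G3) := by
        have e : (∑ p : Fin m × Fin m, if p.1 ∉ S ∧ p.2 ∉ S ∧ p.1 ≠ p.2
              then (R p.1 p.2)^2 * (C * G3) else 0)
            = (∑ p ∈ univ.filter (fun p : Fin m × Fin m => p.1 ∉ S ∧ p.2 ∉ S ∧ p.1 ≠ p.2),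
                (R p.1 p.2)^2) * (C * G3) := by
          rw [← Finset.sum_filter, Finset.sum_mul]
        rw [e]
        refine mul_le_mul_of_nonneg_right ?_ (by positivity)
        exact corr_offdiag_total hR _ (fun p hp => (Finset.mem_filter.mp hp).2.2.2)
      -- combine
      have hTb : Tb m F n k ≤ Tb m F (n+1) k := Tb_mono hF0 n k
      have hTF : F * G2 ≤ Tb m F (n+1) k := Tb_F' hF0 n k
      have hTm : (m:ℝ) * G2 ≤ Tb m F (n+1) k := Tb_m' hF0 n k
      have hTF2 : F^2 * G3 ≤ Tb m F (n+1) k := Tb_F2' hF0 n k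
      have final : 64 * (C * G1) + 8 * F * (C * G2) + 8 * F * (C * G2) + (m:ℝ) * (C * G2)
          + F^2 * (C * G3) ≤ 82 * C * Tb m F (n+1) k := by
        have b1 : 64 * (C * G1) ≤ 64 * C * Tb m F (n+1) k := by
          have : G1 ≤ Tb m F (n+1) k := le_trans (le_of_eq hG1) hTb
          nlinarith
        have b2 : 8 * F * (C * G2) ≤ 8 * C * Tb m F (n+1) k := by
          have := mul_le_mul_of_nonneg_left hTF hCn
          nlinarith
        have b4 : (m:ℝ) * (C * G2) ≤ C * Tb m F (n+1) k := by
          have := mul_le_mul_of_nonneg_left hTm hCn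
          nlinarith
        have b5 : F^2 * (C * G3) ≤ C * Tb m F (n+1) k := by
          have := mul_le_mul_of_nonneg_left hTF2 hCn
          nlinarith
        linarith
      refine le_trans (le_of_eq (Finset.sum_congr rfl fun p _ =>
        (Finset.mul_sum Finset.univ _ ((R p.1 p.2)^2)).symm)) (le_trans hle ?_)
      linarith [t1, t2, t3, t4, t5, final]

def eightEquiv (m : ℕ) : (Fin 8 → Fin m) ≃ (Fin 4 → Fin m × Fin m) where
  toFun := fun u d => (u ⟨2*d.1, Nat.lt_succ_of_le (by omega)⟩, u ⟨2*d.1+1, Nat.lt_succ_of_le (by omega)⟩)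
  invFun := fun w j => if j.1 % 2 = 0 then (w ⟨j.1/2, by omega⟩).1 else (w ⟨j.1/2, by omega⟩).2
  left_inv := by
    intro u; funext j
    rcases Nat.mod_two_eq_zero_or_one j.1 with h | h
    · dsimp only
      rw [if_pos h]
      congr 1
      exact Fin.ext (by first | omega | (simp; omega))
    · dsimp only
      rw [if_neg (by omega)]
      congr 1
      exact Fin.ext (by first | omega | (simp; omega))
  right_inv := by
    intro w; funext d
    refine Prod.ext ?_ ?_
    · dsimp only
      rw [if_pos (by omega)]
      congr 1
      congr 1
      refine Fin.ext ?_
      show (2*d.1)/2 = d.1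
      omega
    · dsimp only
      rw [if_neg (by omega)]
      congr 1
      congr 1
      refine Fin.ext ?_
      show (2*d.1+1)/2 = d.1
      omega

lemma image_eq_pairVals {m : ℕ} (u : Fin 8 → Fin m) :
    Finset.image u Finset.univ = pairVals (eightEquiv m u) := by
  ext x
  simp only [Finset.mem_image, Finset.mem_univ, true_and, pairVals, Finset.mem_union]
  constructor
  · rintro ⟨j, hj⟩
    have hd : j.1 / 2 < 4 := by omega
    rcases Nat.mod_two_eq_zero_or_one j.1 with h | h
    · refine Or.inl ⟨⟨j.1/2, hd⟩, ?_⟩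
      have : (⟨2*(j.1/2), by omega⟩ : Fin 8) = j := Fin.ext (by simp; omega)
      show u ⟨2*(j.1/2), by omega⟩ = x
      rw [this]; exact hj
    · refine Or.inr ⟨⟨j.1/2, hd⟩, ?_⟩
      have : (⟨2*(j.1/2)+1, by omega⟩ : Fin 8) = j := Fin.ext (by simp; omega)
      show u ⟨2*(j.1/2)+1, by omega⟩ = x
      rw [this]; exact hj
  · rintro (⟨d, hd⟩ | ⟨d, hd⟩)
    · exact ⟨⟨2*d.1, by omega⟩, hd⟩
    · exact ⟨⟨2*d.1+1, by omega⟩, hd⟩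


set_option maxHeartbeats 1000000 in
theorem sum_prod_corr_perm_pair_le (π τ : Equiv.Perm (Fin 8)) (k : ℕ)
    (hk : k ∈ ({5, 6, 7, 8} : Finset ℕ)) :
    ∃ C : ℝ, 0 < C ∧ ∀ (m : ℕ) (R : Matrix (Fin m) (Fin m) ℝ), IsCorrMatrix R →
      ∑ v ∈ (Finset.univ : Finset (Fin 8 → Fin m)).filter
          (fun v => (Finset.image v Finset.univ).card = k),
        ∏ d : Fin 4,
          |R (v (π ⟨2 * d.1, by omega⟩)) (v (π ⟨2 * d.1 + 1, by omega⟩))| *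
          |R (v (τ ⟨2 * d.1, by omega⟩)) (v (τ ⟨2 * d.1 + 1, by omega⟩))|
        ≤ C * (m : ℝ) ^ (8 - k) * frobDistId R ^ (2 * (k - 4)) := by
  have hk' : 5 ≤ k ∧ k ≤ 8 := by
    have : k = 5 ∨ k = 6 ∨ k = 7 ∨ k = 8 := by simpa using hk
    omega
  obtain ⟨C, hC0, hcore⟩ := core_bound 4
  refine ⟨5 * C, by positivity, fun m R hR => ?_⟩
  have hF0 : 0 ≤ frobDistId R := Real.sqrt_nonneg _
  have hFm : frobDistId R ≤ (m:ℝ) := corr_frob_le hR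
  -- per-permutation bound for the squared products
  have hperm : ∀ σ : Equiv.Perm (Fin 8),
      (∑ v : Fin 8 → Fin m, if (Finset.image v Finset.univ).card = k
        then ∏ d : Fin 4,
          (R (v (σ ⟨2 * d.1, by omega⟩)) (v (σ ⟨2 * d.1 + 1, by omega⟩)))^2 else 0)
      ≤ C * Tb m (frobDistId R) 4 k := by
    intro σ
    have e1 : (∑ v : Fin 8 → Fin m, if (Finset.image v Finset.univ).card = k
          then ∏ d : Fin 4,
            (R (v (σ ⟨2 * d.1, by omega⟩)) (v (σ ⟨2 * d.1 + 1, by omega⟩)))^2 else 0)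
        = ∑ u : Fin 8 → Fin m, if (Finset.image u Finset.univ).card = k
          then ∏ d : Fin 4,
            (R (u ⟨2 * d.1, by omega⟩) (u ⟨2 * d.1 + 1, by omega⟩))^2 else 0 := by
      refine Fintype.sum_equiv (Equiv.arrowCongr σ.symm (Equiv.refl (Fin m))) _ _ (fun v => ?_)
      have happ : (Equiv.arrowCongr σ.symm (Equiv.refl (Fin m))) v = fun j => v (σ j) := by
        funext j
        simp [Equiv.arrowCongr]
      rw [happ]
      have himg : Finset.image (fun j => v (σ j)) Finset.univ = Finset.image v Finset.univ := by
        have h1 : (fun j : Fin 8 => v (σ j)) = v ∘ σ := rfl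
        rw [h1, ← Finset.image_image]
        congr 1
        exact Finset.image_univ_equiv σ
      rw [himg]
    rw [e1]
    have e2 : (∑ u : Fin 8 → Fin m, if (Finset.image u Finset.univ).card = k
          then ∏ d : Fin 4,
            (R (u ⟨2 * d.1, by omega⟩) (u ⟨2 * d.1 + 1, by omega⟩))^2 else 0)
        = ∑ w : Fin 4 → Fin m × Fin m,
            if ((∅ : Finset (Fin m)) ∪ pairVals w).card = (∅ : Finset (Fin m)).card + k
            then ∏ d, (R (w d).1 (w d).2)^2 else 0 := by
      refine Fintype.sum_equiv (eightEquiv m) _ _ (fun u => ?_)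
      exact if_congr (by rw [image_eq_pairVals u]; simp) rfl rfl
    rw [e2]
    exact hcore m R hR ∅ k (by simp)
  -- pointwise AM-GM
  have point : ∀ v : Fin 8 → Fin m,
      (∏ d : Fin 4,
        |R (v (π ⟨2 * d.1, by omega⟩)) (v (π ⟨2 * d.1 + 1, by omega⟩))| *
        |R (v (τ ⟨2 * d.1, by omega⟩)) (v (τ ⟨2 * d.1 + 1, by omega⟩))|)
      ≤ (1/2) * ((∏ d : Fin 4,
          (R (v (π ⟨2 * d.1, by omega⟩)) (v (π ⟨2 * d.1 + 1, by omega⟩)))^2)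
        + (∏ d : Fin 4,
          (R (v (τ ⟨2 * d.1, by omega⟩)) (v (τ ⟨2 * d.1 + 1, by omega⟩)))^2)) := by
    intro v
    rw [Finset.prod_mul_distrib]
    set A := ∏ d : Fin 4, |R (v (π ⟨2 * d.1, by omega⟩)) (v (π ⟨2 * d.1 + 1, by omega⟩))| with hA
    set B := ∏ d : Fin 4, |R (v (τ ⟨2 * d.1, by omega⟩)) (v (τ ⟨2 * d.1 + 1, by omega⟩))| with hB
    have hA2 : A^2 = ∏ d : Fin 4,
        (R (v (π ⟨2 * d.1, by omega⟩)) (v (π ⟨2 * d.1 + 1, by omega⟩)))^2 := by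
      rw [hA, ← Finset.prod_pow]
      exact Finset.prod_congr rfl fun d _ => sq_abs _
    have hB2 : B^2 = ∏ d : Fin 4,
        (R (v (τ ⟨2 * d.1, by omega⟩)) (v (τ ⟨2 * d.1 + 1, by omega⟩)))^2 := by
      rw [hB, ← Finset.prod_pow]
      exact Finset.prod_congr rfl fun d _ => sq_abs _
    rw [← hA2, ← hB2]
    nlinarith [sq_nonneg (A - B)]
  -- assemble
  rw [Finset.sum_filter]
  have step1 : (∑ v : Fin 8 → Fin m, if (Finset.image v Finset.univ).card = k then
        ∏ d : Fin 4,
          |R (v (π ⟨2 * d.1, by omega⟩)) (v (π ⟨2 * d.1 + 1, by omega⟩))| *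
          |R (v (τ ⟨2 * d.1, by omega⟩)) (v (τ ⟨2 * d.1 + 1, by omega⟩))| else 0)
      ≤ ∑ v : Fin 8 → Fin m, (1/2) *
          ((if (Finset.image v Finset.univ).card = k then ∏ d : Fin 4,
            (R (v (π ⟨2 * d.1, by omega⟩)) (v (π ⟨2 * d.1 + 1, by omega⟩)))^2 else 0)
          + (if (Finset.image v Finset.univ).card = k then ∏ d : Fin 4,
            (R (v (τ ⟨2 * d.1, by omega⟩)) (v (τ ⟨2 * d.1 + 1, by omega⟩)))^2 else 0)) := by
    refine Finset.sum_le_sum fun v _ => ?_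
    by_cases hc : (Finset.image v Finset.univ).card = k
    · rw [if_pos hc, if_pos hc, if_pos hc]
      exact point v
    · rw [if_neg hc, if_neg hc, if_neg hc]
      norm_num
  refine le_trans step1 ?_
  have step2 : (∑ v : Fin 8 → Fin m, (1/2) *
          ((if (Finset.image v Finset.univ).card = k then ∏ d : Fin 4,
            (R (v (π ⟨2 * d.1, by omega⟩)) (v (π ⟨2 * d.1 + 1, by omega⟩)))^2 else 0)
          + (if (Finset.image v Finset.univ).card = k then ∏ d : Fin 4,
            (R (v (τ ⟨2 * d.1, by omega⟩)) (v (τ ⟨2 * d.1 + 1, by omega⟩)))^2 else 0)))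
      = (1/2) * ((∑ v : Fin 8 → Fin m, if (Finset.image v Finset.univ).card = k then ∏ d : Fin 4,
            (R (v (π ⟨2 * d.1, by omega⟩)) (v (π ⟨2 * d.1 + 1, by omega⟩)))^2 else 0)
        + (∑ v : Fin 8 → Fin m, if (Finset.image v Finset.univ).card = k then ∏ d : Fin 4,
            (R (v (τ ⟨2 * d.1, by omega⟩)) (v (τ ⟨2 * d.1 + 1, by omega⟩)))^2 else 0)) := by
    rw [← Finset.mul_sum, Finset.sum_add_distrib]
  rw [step2]
  have hTb5 : Tb m (frobDistId R) 4 k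
      ≤ 5 * ((m:ℝ)^(8-k) * frobDistId R ^(2*(k-4))) := Tb_final hF0 hFm hk'.1 hk'.2
  have h1 := hperm π
  have h2 := hperm τ
  have hfin : (1/2 : ℝ) * (C * Tb m (frobDistId R) 4 k + C * Tb m (frobDistId R) 4 k)
      ≤ 5 * C * (m : ℝ) ^ (8 - k) * frobDistId R ^ (2 * (k - 4)) := by
    have : C * Tb m (frobDistId R) 4 k ≤ C * (5 * ((m:ℝ)^(8-k) * frobDistId R ^(2*(k-4)))) :=
      mul_le_mul_of_nonneg_left hTb5 (le_of_lt hC0)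
    nlinarith [this]
  refine le_trans ?_ hfin
  have hp1 : (0:ℝ) ≤ 1/2 := by norm_num
  nlinarith [h1, h2]
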